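/- Necessity of the two-dimensional Nyquist rate: Let Ω > 0 and h > π/Ω. Then there exists a nonzero continuous function f ∈ L²(ℝ²) whose Fourier transform is supported in the closed ball of radius Ω such that f(k h) = 0 for every k ∈ ℤ². In particular, Ω-band-limited functions on ℝ² are not uniquely determined by samples on the grid hℤ² when h > π/Ω. -/

import Mathlib

open MeasureTheory

noncomputable section

/-- The plane `ℝ²` as a Euclidean space. -/
abbrev E2 := EuclideanSpace ℝ (Fin 2)

/-- Inverse Fourier transform on `ℝ²` with the convention
`f(x) = (2π)⁻² ∫ F(ξ) e^{i⟨x,ξ⟩} dξ`. -/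
def invFourier2 (F : E2 → ℂ) (x : E2) : ℂ :=
  (1 / (2 * Real.pi) ^ 2 : ℂ) *
    ∫ ξ : E2, Complex.exp (Complex.I * ((inner ℝ ξ x : ℝ) : ℂ)) * F ξ

/-- The grid point `k h = (k₁ h, k₂ h) ∈ ℝ²` for `k ∈ ℤ²`. -/
def gridPt (h : ℝ) (k : ℤ × ℤ) : E2 :=
  (WithLp.equiv 2 (Fin 2 → ℝ)).symm ![(k.1 : ℝ) * h, (k.2 : ℝ) * h]

open scoped FourierTransform

/-- A smooth compactly supported function is Schwartz. -/
lemma exists_schwartz_of_compact_support {f : E2 → ℂ} (h1 : ContDiff ℝ ((⊤ : ℕ∞) : WithTop ℕ∞) f)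
    (h2 : HasCompactSupport f) : ∃ g : SchwartzMap E2 ℂ, ⇑g = f := by
  refine ⟨⟨f, h1, fun k n => ?_⟩, rfl⟩
  have hc : Continuous fun x : E2 => ‖x‖ ^ k * ‖iteratedFDeriv ℝ n f x‖ :=
    (continuous_norm.pow k).mul
      (h1.continuous_iteratedFDeriv (by exact_mod_cast le_top)).norm
  have hs : HasCompactSupport fun x : E2 => ‖x‖ ^ k * ‖iteratedFDeriv ℝ n f x‖ :=
    ((h2.iteratedFDeriv n).norm).mul_left
  obtain ⟨C, hC⟩ := hc.bounded_above_of_compact_support hs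
  exact ⟨C, fun x => le_trans (le_abs_self _) (by rw [← Real.norm_eq_abs]; exact hC x)⟩

/-- **Necessity of the two-dimensional Nyquist rate.**  If `h > π/Ω` there is a
nonzero continuous `f ∈ L²(ℝ²)` with Fourier transform supported in the closed
ball of radius `Ω` vanishing at all grid points `kh`, `k ∈ ℤ²`; in particular
`Ω`-band-limited functions on `ℝ²` are not uniquely determined by their
samples on the grid `hℤ²`. -/
theorem nyquist_necessity_2d
    (Ω h : ℝ) (hΩ : 0 < Ω) (hh : Real.pi / Ω < h) :
    (∃ F : E2 → ℂ, Integrable F ∧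
      (∀ ξ : E2, ξ ∉ Metric.closedBall (0 : E2) Ω → F ξ = 0) ∧
      MemLp (invFourier2 F) 2 volume ∧
      Continuous (invFourier2 F) ∧
      invFourier2 F ≠ 0 ∧
      (∀ k : ℤ × ℤ, invFourier2 F (gridPt h k) = 0)) ∧
    ¬ (∀ F G : E2 → ℂ, Integrable F → Integrable G →
        (∀ ξ : E2, ξ ∉ Metric.closedBall (0 : E2) Ω → F ξ = 0) →
        (∀ ξ : E2, ξ ∉ Metric.closedBall (0 : E2) Ω → G ξ = 0) →
        (∀ k : ℤ × ℤ, invFourier2 F (gridPt h k) = invFourier2 G (gridPt h k)) →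
        invFourier2 F = invFourier2 G) := by
  have hπ : (0 : ℝ) < Real.pi := Real.pi_pos
  have hh0 : 0 < h := lt_trans (div_pos hπ hΩ) hh
  set ω : ℝ := Real.pi / h with hωdef
  have hω0 : 0 < ω := div_pos hπ hh0
  have hωΩ : ω < Ω := by
    rw [hωdef, div_lt_iff₀ hh0]
    rw [div_lt_iff₀ hΩ] at hh
    nlinarith
  set r : ℝ := min ω (Ω - ω) with hrdef
  have hr0 : 0 < r := lt_min hω0 (by linarith)
  have hrω : r ≤ ω := min_le_left _ _
  have hrΩ : r ≤ Ω - ω := min_le_right _ _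
  set p : E2 := (WithLp.equiv 2 (Fin 2 → ℝ)).symm ![ω, 0] with hpdef
  have hpnorm : ‖p‖ = ω := by
    rw [hpdef, EuclideanSpace.norm_eq]
    simp [Fin.sum_univ_two, Real.sqrt_sq hω0.le]
  set ψ : ContDiffBump (0 : E2) := ⟨r / 2, r, by positivity, by linarith⟩ with hψdef
  set F : E2 → ℂ := fun ξ => ((ψ (ξ - p) : ℝ) : ℂ) - ((ψ (ξ + p) : ℝ) : ℂ) with hFdef
  -- support
  have hFsupp : ∀ ξ : E2, ξ ∉ Metric.closedBall (0 : E2) Ω → F ξ = 0 := by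
    intro ξ hξ
    rw [Metric.mem_closedBall, dist_zero_right, not_le] at hξ
    have h1 : ψ (ξ - p) = 0 := by
      apply ψ.zero_of_le_dist
      rw [dist_zero_right]
      have := norm_sub_norm_le ξ p
      simp only [hψdef]
      linarith [hpnorm ▸ this]
    have h2 : ψ (ξ + p) = 0 := by
      apply ψ.zero_of_le_dist
      rw [dist_zero_right]
      have h3 := abs_norm_sub_norm_le (ξ + p) ξ
      rw [add_sub_cancel_left] at h3
      have h4 := (abs_le.mp h3).1
      simp only [hψdef]
      rw [hpnorm] at h4
      linarith
    simp [hFdef, h1, h2]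
  -- smoothness
  have hFsm : ContDiff ℝ ((⊤ : ℕ∞) : WithTop ℕ∞) F := by
    have h1 : ContDiff ℝ ((⊤ : ℕ∞) : WithTop ℕ∞) fun ξ : E2 => ψ (ξ - p) :=
      ψ.contDiff.comp (contDiff_id.sub contDiff_const)
    have h2 : ContDiff ℝ ((⊤ : ℕ∞) : WithTop ℕ∞) fun ξ : E2 => ψ (ξ + p) :=
      ψ.contDiff.comp (contDiff_id.add contDiff_const)
    exact (Complex.ofRealCLM.contDiff.comp h1).sub (Complex.ofRealCLM.contDiff.comp h2)
  have hFcs : HasCompactSupport F :=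
    HasCompactSupport.intro (isCompact_closedBall (0 : E2) Ω) hFsupp
  obtain ⟨Fs, hFs⟩ := exists_schwartz_of_compact_support hFsm hFcs
  have hFint : Integrable F := hFs ▸ Fs.integrable
  -- value at p
  have hFp : F p = 1 := by
    have h1 : ψ (0 : E2) = 1 :=
      ψ.one_of_mem_closedBall (by simp [hψdef]; positivity)
    have h2 : ψ (p + p) = 0 := by
      apply ψ.zero_of_le_dist
      rw [dist_zero_right]
      have : ‖p + p‖ = 2 * ω := by
        rw [← two_smul ℝ p, norm_smul, hpnorm]
        simp
      rw [this]
      simp only [hψdef]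
      linarith
    simp [hFdef, h1, h2]
  -- relation with the Mathlib Fourier transform
  set c : ℂ := (1 / (2 * Real.pi) ^ 2 : ℂ) with hcdef
  have h2pi : (2 * (Real.pi : ℂ)) ≠ 0 := by
    simp only [ne_eq, mul_eq_zero, not_or]
    exact ⟨two_ne_zero, by exact_mod_cast Real.pi_ne_zero⟩
  have hc0 : c ≠ 0 := by
    rw [hcdef]
    exact div_ne_zero one_ne_zero (pow_ne_zero _ h2pi)
  set b : ℝ := -(2 * Real.pi)⁻¹ with hbdef
  have hb0 : b ≠ 0 := by
    simp only [hbdef, neg_ne_zero, ne_eq, inv_eq_zero]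
    positivity
  set G : SchwartzMap E2 ℂ := SchwartzMap.fourierTransformCLM ℝ Fs with hGdef
  have hGapp : ∀ w : E2, G w = 𝓕 (⇑Fs) w := fun w => rfl
  have key : ∀ x : E2, invFourier2 F x = c * G (b • x) := by
    intro x
    rw [invFourier2, hGapp, Real.fourier_eq']
    congr 1
    refine integral_congr_ae (Filter.Eventually.of_forall fun v => ?_)
    show Complex.exp (Complex.I * ((inner ℝ v x : ℝ) : ℂ)) * F v
      = Complex.exp (((-2 * Real.pi * (inner ℝ v (b • x) : ℝ) : ℝ) : ℂ) * Complex.I) • Fs v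
    have hinner : (inner ℝ v (b • x) : ℝ) = b * (inner ℝ v x : ℝ) := real_inner_smul_right v x b
    rw [hinner, hFs]
    have harg : (-2 * Real.pi * (b * (inner ℝ v x : ℝ)) : ℝ) = (inner ℝ v x : ℝ) := by
      rw [hbdef]
      field_simp
    rw [harg, smul_eq_mul]
    ring_nf
  -- continuity
  have hcont : Continuous (invFourier2 F) := by
    have : invFourier2 F = fun x => c * G (b • x) := funext key
    rw [this]
    exact continuous_const.mul (G.continuous.comp (continuous_const_smul b))
  -- L² bound
  have hmem : MemLp (invFourier2 F) 2 volume := by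
    rw [memLp_two_iff_integrable_sq_norm hcont.aestronglyMeasurable]
    obtain ⟨C, hC0, hC⟩ := G.decay 0 0
    have hGb : ∀ y : E2, ‖G y‖ ≤ C := by
      intro y
      have := hC y
      simpa [norm_iteratedFDeriv_zero] using this
    have hint : Integrable (fun y : E2 => ‖G y‖ ^ 2) := by
      refine (G.integrable.norm.const_mul C).mono'
        ((G.continuous.norm.pow 2).aestronglyMeasurable) ?_
      filter_upwards with y
      rw [Real.norm_eq_abs, abs_of_nonneg (by positivity), pow_two]
      exact mul_le_mul_of_nonneg_right (hGb y) (norm_nonneg _)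
    have hcomp : Integrable (fun x : E2 => ‖G (b • x)‖ ^ 2) := hint.comp_smul hb0
    have heq : (fun x : E2 => ‖invFourier2 F x‖ ^ 2)
        = fun x => ‖c‖ ^ 2 * ‖G (b • x)‖ ^ 2 := by
      funext x
      rw [key x, norm_mul, mul_pow]
    rw [heq]
    exact hcomp.const_mul _
  -- nonvanishing
  have hne : invFourier2 F ≠ 0 := by
    intro h0
    have hG0 : ∀ y : E2, G y = 0 := by
      intro y
      have hk := key (b⁻¹ • y)
      rw [h0] at hk
      rw [smul_smul, mul_inv_cancel₀ hb0, one_smul] at hk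
      have := hk.symm
      simpa [hc0] using this
    have hFf0 : 𝓕 (⇑Fs) = 0 := by
      funext y
      rw [← hGapp]
      exact hG0 y
    have hGint : Integrable (𝓕 (⇑Fs)) := by
      have := G.integrable (μ := volume)
      rwa [hGdef, SchwartzMap.fourierTransformCLM_apply] at this
    have hinv := Fs.continuous.fourierInv_fourier_eq Fs.integrable hGint
    have hFsp : Fs p = 0 := by
      rw [← hinv, hFf0, Real.fourierInv_eq]
      simp
    rw [hFs, hFp] at hFsp
    exact one_ne_zero hFsp
  -- vanishing at the grid points
  have hgrid : ∀ k : ℤ × ℤ, invFourier2 F (gridPt h k) = 0 := by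
    intro k
    set x : E2 := gridPt h k with hxdef
    have hcont_e : Continuous fun ξ : E2 =>
        Complex.exp (Complex.I * ((inner ℝ ξ x : ℝ) : ℂ)) :=
      Complex.continuous_exp.comp (continuous_const.mul
        (Complex.continuous_ofReal.comp (continuous_id.inner continuous_const)))
    have hψcont : Continuous fun y : E2 => ((ψ y : ℝ) : ℂ) :=
      Complex.continuous_ofReal.comp ψ.continuous
    have hint : ∀ q : E2, Integrable fun ξ : E2 =>
        Complex.exp (Complex.I * ((inner ℝ ξ x : ℝ) : ℂ)) * ((ψ (ξ - q) : ℝ) : ℂ) := by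
      intro q
      apply Continuous.integrable_of_hasCompactSupport
      · exact hcont_e.mul (hψcont.comp (continuous_id.sub continuous_const))
      · apply HasCompactSupport.mul_left
        apply HasCompactSupport.intro (isCompact_closedBall q r)
        intro ξ hξ
        rw [Metric.mem_closedBall, not_le] at hξ
        have hz : ψ (ξ - q) = 0 := by
          apply ψ.zero_of_le_dist
          rw [dist_zero_right, ← dist_eq_norm]
          simp only [hψdef]
          exact hξ.le
        simp [hz]
    have main : ∀ q : E2,
        (∫ ξ : E2, Complex.exp (Complex.I * ((inner ℝ ξ x : ℝ) : ℂ)) * ((ψ (ξ - q) : ℝ) : ℂ))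
          = Complex.exp (Complex.I * ((inner ℝ q x : ℝ) : ℂ)) *
            ∫ η : E2, Complex.exp (Complex.I * ((inner ℝ η x : ℝ) : ℂ)) * ((ψ η : ℝ) : ℂ) := by
      intro q
      have h1 := MeasureTheory.integral_add_right_eq_self (μ := volume)
        (fun ξ : E2 => Complex.exp (Complex.I * ((inner ℝ ξ x : ℝ) : ℂ)) * ((ψ (ξ - q) : ℝ) : ℂ)) q
      rw [← h1, ← smul_eq_mul, ← integral_smul]
      congr 1
      funext η
      simp only [add_sub_cancel_right]
      rw [inner_add_left, smul_eq_mul]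
      push_cast
      rw [mul_add, Complex.exp_add]
      ring
    have hsplit : invFourier2 F x = c *
        ((∫ ξ : E2, Complex.exp (Complex.I * ((inner ℝ ξ x : ℝ) : ℂ)) * ((ψ (ξ - p) : ℝ) : ℂ))
          - ∫ ξ : E2, Complex.exp (Complex.I * ((inner ℝ ξ x : ℝ) : ℂ)) * ((ψ (ξ - (-p)) : ℝ) : ℂ)) := by
      rw [invFourier2, ← hcdef]
      congr 1
      rw [← integral_sub (hint p) (hint (-p))]
      congr 1
      funext ξ
      simp only [hFdef, sub_neg_eq_add]
      ring
    have hpx : (inner ℝ p x : ℝ) = (k.1 : ℝ) * Real.pi := by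
      simp only [hpdef, hxdef, gridPt, PiLp.inner_apply, RCLike.inner_apply,
        WithLp.equiv_symm_apply, PiLp.toLp_apply, WithLp.ofLp_toLp, Fin.sum_univ_two, Matrix.cons_val_zero,
        Matrix.cons_val_one, Matrix.head_cons, starRingEnd_apply, star_trivial, hωdef]
      field_simp
      ring
    have hnegpx : (inner ℝ (-p) x : ℝ) = -((k.1 : ℝ) * Real.pi) := by
      rw [inner_neg_left, hpx]
    have hAB : Complex.exp (Complex.I * ((inner ℝ p x : ℝ) : ℂ))
        = Complex.exp (Complex.I * ((inner ℝ (-p) x : ℝ) : ℂ)) := by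
      rw [hpx, hnegpx]
      have hmulI : ∀ t : ℝ, Complex.exp (Complex.I * (t : ℂ))
          = Complex.cos t + Complex.sin t * Complex.I := fun t => by
        rw [mul_comm, Complex.exp_mul_I]
      rw [hmulI, hmulI]
      have hsin : Complex.sin (((k.1 : ℝ) * Real.pi : ℝ) : ℂ) = 0 := by
        push_cast
        exact_mod_cast Complex.sin_int_mul_pi k.1
      push_cast at hsin ⊢
      rw [Complex.cos_neg, Complex.sin_neg, hsin]
      ring
    rw [hsplit, main p, main (-p), hAB]
    ring
  refine ⟨⟨F, hFint, hFsupp, hmem, hcont, hne, hgrid⟩, ?_⟩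
  intro H
  have hzero : invFourier2 (fun _ : E2 => (0 : ℂ)) = 0 := by
    funext x
    simp [invFourier2]
  have heq := H F (fun _ => 0) hFint (integrable_zero _ _ _) hFsupp (fun ξ _ => rfl)
    (fun k => by rw [hgrid k, hzero]; rfl)
  rw [heq, hzero] at hne
  exact hne rfl
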